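/- For any two discrete probability distributions D and D' on a countable set with equal support such that D_∞(D‖D') ≤ ε and D_∞(D'‖D) ≤ ε, one has D_KL(D‖D') + D_KL(D'‖D) ≤ ε·(e^ε − 1); in particular D_KL(D‖D') ≤ ε·(e^ε − 1). -/
import Mathlib


open scoped ENNReal

/-- The probability that a discrete distribution `P` assigns to a set `S`. -/
noncomputable def pmfProb {α : Type*} (P : PMF α) (S : Set α) : ℝ≥0∞ :=
  ∑' x, S.indicator (fun y => P y) x

/-- The (exponentiated) max divergence `exp (D_∞(P‖Q)) = sup_S P(S)/Q(S)`;
`D_∞(P‖Q) ≤ ε` is expressed as `DinfExp P Q ≤ ENNReal.ofReal (exp ε)`. -/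
noncomputable def DinfExp {α : Type*} (P Q : PMF α) : ℝ≥0∞ :=
  ⨆ S : Set α, pmfProb P S / pmfProb Q S

/-- The KL divergence `D_KL(P‖Q) = Σ_x P(x) ln (P(x)/Q(x))`. -/
noncomputable def KL {α : Type*} (P Q : PMF α) : ℝ :=
  ∑' x, (P x).toReal * Real.log ((P x).toReal / (Q x).toReal)

private lemma pmfProb_singleton {α : Type*} (P : PMF α) (x : α) :
    pmfProb P {x} = P x := by
  unfold pmfProb
  rw [tsum_eq_single x]
  · simp
  · intro b hb
    exact Set.indicator_of_notMem (by simpa using hb) _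

private lemma pointwise_real {α : Type*} (P Q : PMF α) {ε : ℝ}
    (h : DinfExp P Q ≤ ENNReal.ofReal (Real.exp ε)) (x : α) :
    (P x).toReal ≤ Real.exp ε * (Q x).toReal := by
  have key : P x / Q x ≤ ENNReal.ofReal (Real.exp ε) := by
    refine le_trans ?_ h
    rw [← pmfProb_singleton P x, ← pmfProb_singleton Q x]
    exact le_iSup (fun S => pmfProb P S / pmfProb Q S) ({x} : Set α)
  by_cases hq : Q x = 0
  · have hP : P x = 0 := by
      by_contra hP
      rw [hq, ENNReal.div_zero hP] at key
      exact (ENNReal.ofReal_ne_top (top_le_iff.1 key)).elim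
    rw [hP]
    simpa using mul_nonneg (Real.exp_pos ε).le ENNReal.toReal_nonneg
  · have hle : P x ≤ ENNReal.ofReal (Real.exp ε) * Q x :=
      (ENNReal.div_le_iff_le_mul (Or.inl hq) (Or.inl (PMF.apply_ne_top Q x))).1 key
    have hfin : ENNReal.ofReal (Real.exp ε) * Q x ≠ ⊤ :=
      ENNReal.mul_ne_top ENNReal.ofReal_ne_top (PMF.apply_ne_top Q x)
    calc (P x).toReal ≤ (ENNReal.ofReal (Real.exp ε) * Q x).toReal :=
          ENNReal.toReal_mono hfin hle
      _ = Real.exp ε * (Q x).toReal := by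
          rw [ENNReal.toReal_mul, ENNReal.toReal_ofReal (Real.exp_pos ε).le]

/-- **KL bound for bounded max divergence.** For any two discrete distributions `D, D'` on a
countable set with equal support such that `D_∞(D‖D') ≤ ε` and `D_∞(D'‖D) ≤ ε`, one has
`D_KL(D‖D') + D_KL(D'‖D) ≤ ε (e^ε − 1)`; in particular `D_KL(D‖D') ≤ ε (e^ε − 1)`. -/
theorem kl_add_kl_le {α : Type*} [Countable α] (D D' : PMF α) (ε : ℝ) (hε : 0 ≤ ε)
    (hsupp : D.support = D'.support)
    (h1 : DinfExp D D' ≤ ENNReal.ofReal (Real.exp ε))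
    (h2 : DinfExp D' D ≤ ENNReal.ofReal (Real.exp ε)) :
    KL D D' + KL D' D ≤ ε * (Real.exp ε - 1) ∧ KL D D' ≤ ε * (Real.exp ε - 1) := by
  set p : α → ℝ := fun x => (D x).toReal with hp_def
  set q : α → ℝ := fun x => (D' x).toReal with hq_def
  have hpq : ∀ x, p x ≤ Real.exp ε * q x := pointwise_real D D' h1
  have hqp : ∀ x, q x ≤ Real.exp ε * p x := pointwise_real D' D h2
  have hp0 : ∀ x, 0 ≤ p x := fun x => ENNReal.toReal_nonneg
  have hq0 : ∀ x, 0 ≤ q x := fun x => ENNReal.toReal_nonneg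
  have hexp : (0:ℝ) < Real.exp ε := Real.exp_pos ε
  have hexp1 : (1:ℝ) ≤ Real.exp ε := Real.one_le_exp hε
  have hzero : ∀ x, p x = 0 ↔ q x = 0 := by
    intro x
    constructor
    · intro h; have := hqp x; have := hq0 x; nlinarith
    · intro h; have := hpq x; have := hp0 x; nlinarith
  have hpos : ∀ x, p x ≠ 0 → 0 < p x ∧ 0 < q x := by
    intro x hx
    refine ⟨lt_of_le_of_ne (hp0 x) (Ne.symm hx), lt_of_le_of_ne (hq0 x) ?_⟩
    exact fun h => hx ((hzero x).2 h.symm)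
  -- summability and total mass
  have hsp : Summable p :=
    ENNReal.summable_toReal (by rw [D.tsum_coe]; exact ENNReal.one_ne_top)
  have hsq : Summable q :=
    ENNReal.summable_toReal (by rw [D'.tsum_coe]; exact ENNReal.one_ne_top)
  have htp : ∑' x, p x = 1 := by
    rw [← ENNReal.tsum_toReal_eq (fun a => PMF.apply_ne_top D a), D.tsum_coe,
      ENNReal.toReal_one]
  have htq : ∑' x, q x = 1 := by
    rw [← ENNReal.tsum_toReal_eq (fun a => PMF.apply_ne_top D' a), D'.tsum_coe,
      ENNReal.toReal_one]
  -- log bound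
  have hL : ∀ x, |Real.log (p x / q x)| ≤ ε := by
    intro x
    by_cases hx : p x = 0
    · have hq' := (hzero x).1 hx
      simp [hx, hq', hε]
    · obtain ⟨hxp, hxq⟩ := hpos x hx
      rw [abs_le]
      constructor
      · rw [Real.le_log_iff_exp_le (by positivity), Real.exp_neg,
          inv_le_iff_one_le_mul₀ hexp, div_mul_eq_mul_div, le_div_iff₀ hxq]
        nlinarith [hqp x]
      · rw [Real.log_le_iff_le_exp (by positivity), div_le_iff₀ hxq]
        nlinarith [hpq x]
  have hLq : ∀ x, |Real.log (q x / p x)| ≤ ε := by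
    intro x
    by_cases hx : p x = 0
    · have hq' := (hzero x).1 hx
      simp [hx, hq', hε]
    · obtain ⟨hxp, hxq⟩ := hpos x hx
      have : Real.log (q x / p x) = - Real.log (p x / q x) := by
        rw [Real.log_div hxq.ne' hxp.ne', Real.log_div hxp.ne' hxq.ne']; ring
      rw [this, abs_neg]; exact hL x
  -- summability of the KL integrands
  have habs : ∀ (u v : α → ℝ), (∀ x, 0 ≤ u x) → (∀ x, |Real.log (u x / v x)| ≤ ε) →
      Summable u → Summable (fun x => u x * Real.log (u x / v x)) := by
    intro u v hu hb hsu
    apply Summable.of_abs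
    apply Summable.of_nonneg_of_le (fun x => abs_nonneg _) (fun x => ?_) (hsu.mul_left ε)
    rw [abs_mul, abs_of_nonneg (hu x)]
    calc u x * |Real.log (u x / v x)| ≤ u x * ε := by
          exact mul_le_mul_of_nonneg_left (hb x) (hu x)
      _ = ε * u x := mul_comm _ _
  have hsum_f : Summable (fun x => p x * Real.log (p x / q x)) := habs p q hp0 hL hsp
  have hsum_g : Summable (fun x => q x * Real.log (q x / p x)) := habs q p hq0 hLq hsq
  -- key per-term identity
  have hkey : ∀ x, p x * Real.log (p x / q x) + q x * Real.log (q x / p x)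
      = (p x - q x) * Real.log (p x / q x) := by
    intro x
    by_cases hx : p x = 0
    · simp [hx, (hzero x).1 hx]
    · obtain ⟨hxp, hxq⟩ := hpos x hx
      rw [Real.log_div hxq.ne' hxp.ne', Real.log_div hxp.ne' hxq.ne']
      ring
  -- per-term bounds
  have hbound : ∀ x, (p x - q x) * Real.log (p x / q x) ≤ ε * (Real.exp ε - 1) * q x := by
    intro x
    calc (p x - q x) * Real.log (p x / q x)
        ≤ |p x - q x| * |Real.log (p x / q x)| := by rw [← abs_mul]; exact le_abs_self _
      _ ≤ ((Real.exp ε - 1) * q x) * ε := by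
          apply mul_le_mul ?_ (hL x) (abs_nonneg _) ?_
          · rw [abs_le]
            constructor
            · have h := hqp x
              have h2 := hq0 x
              nlinarith [sq_nonneg (Real.exp ε - 1), mul_nonneg h2 (sq_nonneg (Real.exp ε - 1))]
            · nlinarith [hpq x, hq0 x]
          · have := hq0 x; nlinarith
      _ = ε * (Real.exp ε - 1) * q x := by ring
  have hS1 : Summable (fun x => (p x - q x) * Real.log (p x / q x)) :=
    (hsum_f.add hsum_g).congr hkey
  -- main bound
  have hmain : KL D D' + KL D' D ≤ ε * (Real.exp ε - 1) := by
    have heq : KL D D' + KL D' D = ∑' x, (p x - q x) * Real.log (p x / q x) := by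
      show (∑' x, p x * Real.log (p x / q x)) + (∑' x, q x * Real.log (q x / p x)) = _
      rw [← Summable.tsum_add hsum_f hsum_g]
      exact tsum_congr hkey
    rw [heq]
    calc ∑' x, (p x - q x) * Real.log (p x / q x)
        ≤ ∑' x, ε * (Real.exp ε - 1) * q x := Summable.tsum_le_tsum hbound hS1 (hsq.mul_left _)
      _ = ε * (Real.exp ε - 1) * ∑' x, q x := tsum_mul_left
      _ = ε * (Real.exp ε - 1) := by rw [htq]; ring
  -- nonnegativity of KL D' D
  have hg_ge : ∀ x, q x - p x ≤ q x * Real.log (q x / p x) := by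
    intro x
    by_cases hx : p x = 0
    · simp [hx, (hzero x).1 hx]
    · obtain ⟨hxp, hxq⟩ := hpos x hx
      have hlog : Real.log (p x / q x) ≤ p x / q x - 1 :=
        Real.log_le_sub_one_of_pos (by positivity)
      have hneg : Real.log (q x / p x) = - Real.log (p x / q x) := by
        rw [Real.log_div hxq.ne' hxp.ne', Real.log_div hxp.ne' hxq.ne']; ring
      rw [hneg]
      have hd : q x * (p x / q x) = p x := by field_simp
      nlinarith [hlog, hxq, mul_le_mul_of_nonneg_left hlog hxq.le]
  have hKL2 : (0:ℝ) ≤ KL D' D := by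
    have hz : (0:ℝ) = ∑' x, (q x - p x) := by rw [Summable.tsum_sub hsq hsp, htq, htp]; ring
    show (0:ℝ) ≤ ∑' x, q x * Real.log (q x / p x)
    rw [hz]
    exact Summable.tsum_le_tsum hg_ge (hsq.sub hsp) hsum_g
  exact ⟨hmain, by linarith⟩
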